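/- Let a locally compact abelian group G act via α on a set X carrying a G-invariant uniformity 𝒰, and let 𝒰_mix be the mixed uniformity. If the uniformity 𝒰 is metrizable (equivalently, has a countable basis of entourages) and the topology of G is metrizable, then 𝒰_mix is metrizable. -/

import Mathlib

open Uniformity
open Topology

/-- The basic mixed entourage `V[O,U] = {(α t x, y) : t ∈ O, (x,y) ∈ U}`. -/
def mixEnt {G X : Type*} (α : G → X → X) (O : Set G) (U : Set (X × X)) : Set (X × X) :=
  {p : X × X | ∃ t ∈ O, ∃ q ∈ U, p.1 = α t q.1 ∧ p.2 = q.2}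

/-- The mixed uniformity `𝒰_mix`: all supersets of some `V[O,U]` with `U ∈ 𝒰` and `O` an open
set containing `0`. -/
def mixUniformity {G X : Type*} [AddCommGroup G] [TopologicalSpace G] [UniformSpace X]
    (α : G → X → X) : Set (Set (X × X)) :=
  {V : Set (X × X) | ∃ U ∈ 𝓤 X, ∃ O : Set G, IsOpen O ∧ (0 : G) ∈ O ∧ mixEnt α O U ⊆ V}

/-- If the uniformity `𝒰` is metrizable (equivalently, has a countable basis
of entourages) and the topology of `G` is metrizable, then the mixed uniformity `𝒰_mix` is
metrizable (equivalently, has a countable basis of entourages). -/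
theorem stmt12 {G X : Type*}
    [AddCommGroup G] [TopologicalSpace G] [IsTopologicalAddGroup G]
    [LocallyCompactSpace G] [T2Space G] [TopologicalSpace.MetrizableSpace G]
    [UniformSpace X]
    (α : G → X → X)
    (hzero : ∀ x, α 0 x = x)
    (hadd : ∀ s t x, α s (α t x) = α (s + t) x)
    (hinv : ∀ U ∈ 𝓤 X, ∃ U' ∈ 𝓤 X, ∀ (t : G), ∀ p : X × X, p ∈ U' →
      (α t p.1, α t p.2) ∈ U)
    -- `𝒰` has a countable basis of entourages
    (hbasis : ∃ B : Set (Set (X × X)), B.Countable ∧ (∀ W ∈ B, W ∈ 𝓤 X) ∧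
      ∀ U ∈ 𝓤 X, ∃ W ∈ B, W ⊆ U) :
    -- `𝒰_mix` has a countable basis of entourages
    ∃ B : Set (Set (X × X)), B.Countable ∧ B ⊆ mixUniformity α ∧
      ∀ V ∈ mixUniformity α, ∃ W ∈ B, W ⊆ V := by
  obtain ⟨B, hBc, hBU, hBb⟩ := hbasis
  haveI : (𝓝 (0 : G)).IsCountablyGenerated := inferInstance
  obtain ⟨s, hs⟩ := (𝓝 (0 : G)).exists_antitone_basis
  refine ⟨(fun p : ℕ × Set (X × X) => mixEnt α (interior (s p.1)) p.2) ''
      (Set.univ ×ˢ B), ?_, ?_, ?_⟩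
  · exact ((Set.countable_univ.prod hBc)).image _
  · rintro _ ⟨⟨n, W⟩, ⟨-, hW⟩, rfl⟩
    exact ⟨W, hBU W hW, interior (s n), isOpen_interior,
      mem_interior_iff_mem_nhds.2 (hs.toHasBasis.mem_of_mem trivial), subset_rfl⟩
  · rintro V ⟨U, hU, O, hOopen, hO0, hsub⟩
    obtain ⟨n, -, hn⟩ := hs.toHasBasis.mem_iff.1 (hOopen.mem_nhds hO0)
    obtain ⟨W, hW, hWU⟩ := hBb U hU
    refine ⟨mixEnt α (interior (s n)) W, ⟨(n, W), ⟨trivial, hW⟩, rfl⟩, ?_⟩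
    rintro p ⟨t, ht, q, hq, h1, h2⟩
    exact hsub ⟨t, hn (interior_subset ht), q, hWU hq, h1, h2⟩
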